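/- Let X be a real Banach space in which every point of the unit sphere S_X is a locally uniformly nonsquare point (X is locally uniformly nonsquare). Then X has no Δ-points: for every x ∈ S_X there exists ε > 0 such that x does not lie in the closed convex hull of Δ_ε(x). -/

import Mathlib

/-- A locally uniformly nonsquare real Banach space has no
Δ-points. -/
theorem lunsq_space_no_delta_points
    {X : Type*} [NormedAddCommGroup X] [NormedSpace ℝ X] [CompleteSpace X]
    (hlunsq : ∀ x : X, ‖x‖ = 1 →
      ∃ δ > 0, ∀ y : X, ‖y‖ = 1 → min ‖x + y‖ ‖x - y‖ ≤ 2 - δ) :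
    ∀ x : X, ‖x‖ = 1 →
      ∃ ε > 0, x ∉ closure (convexHull ℝ {y : X | ‖y‖ ≤ 1 ∧ 2 - ε ≤ ‖x - y‖}) := by
  intro x hx
  obtain ⟨δ, hδ0, hδ⟩ := hlunsq x hx
  have hx0 : x ≠ 0 := by
    intro h; rw [h, norm_zero] at hx; norm_num at hx
  obtain ⟨f, hf1, hfx⟩ := exists_dual_vector ℝ x (norm_ne_zero_iff.mpr hx0)
  rw [hx] at hfx
  norm_cast at hfx
  have hδ2 : δ ≤ 2 := by
    have h1 := hδ x hx
    have h2 : (0:ℝ) ≤ min ‖x + x‖ ‖x - x‖ := le_min (norm_nonneg _) (norm_nonneg _)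
    linarith
  refine ⟨δ / 3, by positivity, ?_⟩
  set K : Set X := {z : X | f z ≤ 1 - δ / 3} with hK
  have hsub : {y : X | ‖y‖ ≤ 1 ∧ 2 - δ / 3 ≤ ‖x - y‖} ⊆ K := by
    rintro y ⟨hy1, hy2⟩
    by_contra hc
    have hc' : 1 - δ / 3 < f y := lt_of_not_ge hc
    have hfy : f y ≤ ‖y‖ := by
      calc f y ≤ ‖f y‖ := le_abs_self _
        _ ≤ ‖f‖ * ‖y‖ := f.le_opNorm y
        _ = ‖y‖ := by rw [hf1, one_mul]
    have hy0 : (0:ℝ) < ‖y‖ := by linarith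
    have hyne : y ≠ 0 := by
      intro h; rw [h, norm_zero] at hy0; exact lt_irrefl 0 hy0
    set y' : X := ‖y‖⁻¹ • y with hy'
    have hny' : ‖y'‖ = 1 := norm_smul_inv_norm hyne
    have hdiff : ‖y - y'‖ = 1 - ‖y‖ := by
      have : y - y' = (1 - ‖y‖⁻¹) • y := by
        rw [sub_smul, one_smul, hy']
      rw [this, norm_smul, Real.norm_eq_abs]
      have h1 : (1:ℝ) ≤ ‖y‖⁻¹ := by
        rw [le_inv_comm₀ one_pos hy0]; simpa using hy1
      rw [abs_of_nonpos (by linarith)]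
      field_simp
      ring
    have hxplusy : 2 - δ / 3 < ‖x + y‖ := by
      have : f (x + y) ≤ ‖x + y‖ := by
        calc f (x + y) ≤ ‖f (x + y)‖ := le_abs_self _
          _ ≤ ‖f‖ * ‖x + y‖ := f.le_opNorm _
          _ = ‖x + y‖ := by rw [hf1, one_mul]
      rw [map_add, hfx] at this
      linarith
    have h1 : 1 - ‖y‖ < δ / 3 := by linarith
    have hplus : 2 - 2 * (δ / 3) < ‖x + y'‖ := by
      have h2 : ‖x + y‖ ≤ ‖x + y'‖ + ‖y - y'‖ := by
        have := norm_add_le (x + y') (y - y')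
        have he : (x + y') + (y - y') = x + y := by abel
        rw [he] at this
        linarith [this]
      rw [hdiff] at h2
      linarith
    have hminus : 2 - 2 * (δ / 3) < ‖x - y'‖ := by
      have h2 : ‖x - y‖ ≤ ‖x - y'‖ + ‖y - y'‖ := by
        have := norm_add_le (x - y') (y' - y)
        have he : (x - y') + (y' - y) = x - y := by abel
        rw [he, norm_sub_rev y' y] at this
        linarith [this]
      rw [hdiff] at h2
      linarith
    have hmin := hδ y' hny'
    have : 2 - 2 * (δ / 3) < min ‖x + y'‖ ‖x - y'‖ := lt_min hplus hminus
    linarith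
  have hconv : Convex ℝ K :=
    convex_halfSpace_le ⟨f.map_add, f.map_smul⟩ (1 - δ / 3)
  have hclosed : IsClosed K := isClosed_le f.continuous continuous_const
  have hsub2 : closure (convexHull ℝ {y : X | ‖y‖ ≤ 1 ∧ 2 - δ / 3 ≤ ‖x - y‖}) ⊆ K :=
    closure_minimal (convexHull_min hsub hconv) hclosed
  intro hmem
  have : f x ≤ 1 - δ / 3 := hsub2 hmem
  rw [hfx] at this
  linarith
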